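/- For any two points (x₀,y₀) and (x₀′,y₀′) of 𝔖₀₀ there exist unique elements a, b, c, d ∈ F with a^q = a, b^q = b, c^q = c, d^q = d such that x₀′ = a·x₀ + c·y₀ and y₀′ = b·x₀ + d·y₀; moreover these unique a, b, c, d satisfy a·d − b·c ≠ 0. (In other words, GL₂(𝔽_q) acts simply transitively on 𝔖₀₀.) -/

import Mathlib

/-- The set `𝔖₀₀` of pairs `(x₀, y₀)` with `x₀^q·y₀ − x₀·y₀^q ∈ 𝔽_q^×` and
`x₀^{q²−1} = y₀^{q²−1} = −1`. -/
def S00 (q : ℕ) (F : Type*) [Field F] : Set (F × F) :=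
  {xy | (xy.1 ^ q * xy.2 - xy.1 * xy.2 ^ q) ^ q = xy.1 ^ q * xy.2 - xy.1 * xy.2 ^ q ∧
    xy.1 ^ q * xy.2 - xy.1 * xy.2 ^ q ≠ 0 ∧
    xy.1 ^ (q ^ 2 - 1) = -1 ∧ xy.2 ^ (q ^ 2 - 1) = -1}

/-- `GL₂(𝔽_q)` acts simply transitively on `𝔖₀₀`: for any two points of `𝔖₀₀` there are
unique `a, b, c, d ∈ 𝔽_q` carrying the first to the second, and they satisfy `ad − bc ≠ 0`. -/
theorem stmt1 (p : ℕ) (hp : p.Prime) (hodd : Odd p) (q : ℕ)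
    (hq : ∃ n : ℕ, 0 < n ∧ q = p ^ n)
    (F : Type*) [Field F] [IsAlgClosed F] [CharP F p]
    (P P' : F × F) (hP : P ∈ S00 q F) (hP' : P' ∈ S00 q F) :
    (∃! v : F × F × F × F,
      (v.1 ^ q = v.1 ∧ v.2.1 ^ q = v.2.1 ∧ v.2.2.1 ^ q = v.2.2.1 ∧ v.2.2.2 ^ q = v.2.2.2) ∧
      P'.1 = v.1 * P.1 + v.2.2.1 * P.2 ∧ P'.2 = v.2.1 * P.1 + v.2.2.2 * P.2) ∧
    ∀ a b c d : F, a ^ q = a → b ^ q = b → c ^ q = c → d ^ q = d →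
      P'.1 = a * P.1 + c * P.2 → P'.2 = b * P.1 + d * P.2 → a * d - b * c ≠ 0 := by
  obtain ⟨n, hn, rfl⟩ := hq
  haveI : Fact p.Prime := ⟨hp⟩
  set q := p ^ n with hqdef
  obtain ⟨x, y⟩ := P
  obtain ⟨x', y'⟩ := P'
  simp only [S00, Set.mem_setOf_eq] at hP hP'
  obtain ⟨hΔq, hΔ, hx2, hy2⟩ := hP
  obtain ⟨hΔq', hΔ', hx2', hy2'⟩ := hP'
  have hqodd : Odd q := hodd.pow
  have hqpos : 0 < q := pow_pos hp.pos n
  -- Frobenius is additive for subtraction and q-th powers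
  have hsub : ∀ u v : F, (u - v) ^ q = u ^ q - v ^ q := fun u v => sub_pow_char_pow u v n
  have hadd : ∀ u v : F, (u + v) ^ q = u ^ q + v ^ q := fun u v => add_pow_char_pow u v p n
  have h2 : ∀ w : F, (w ^ q) ^ q = w ^ (q ^ 2) := fun w => by rw [← pow_mul, ← pow_two]
  have key : ∀ u : F, u ^ (q ^ 2 - 1) = -1 → u ^ (q ^ 2) = -u := by
    intro u h
    have h1 : q ^ 2 - 1 + 1 = q ^ 2 := Nat.succ_pred_eq_of_pos (pow_pos hqpos 2)
    rw [← h1, pow_succ, h]; ring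
  have hx2n : x ^ (q ^ 2) = -x := key x hx2
  have hy2n : y ^ (q ^ 2) = -y := key y hy2
  have hx2n' : x' ^ (q ^ 2) = -x' := key x' hx2'
  have hy2n' : y' ^ (q ^ 2) = -y' := key y' hy2'
  have hD : x * y ^ q - y * x ^ q ≠ 0 := by
    intro h
    apply hΔ
    have : x ^ q * y - x * y ^ q = -(x * y ^ q - y * x ^ q) := by ring
    rw [this, h, neg_zero]
  set D : F := x * y ^ q - y * x ^ q with hDdef
  have hDq : D ^ q = D := by
    have h1 : D = -(x ^ q * y - x * y ^ q) := by rw [hDdef]; ring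
    rw [h1, neg_pow, hqodd.neg_one_pow, hΔq]; ring
  -- numerators of the Cramer formulas are fixed by Frobenius
  have hfield : ∀ u v : F, u ^ (q ^ 2) = -u → v ^ (q ^ 2) = -v →
      ((u * v ^ q - v * u ^ q) / D) ^ q = (u * v ^ q - v * u ^ q) / D := by
    intro u v hu hv
    have hu' : (u ^ q) ^ q = -u := by rw [h2, hu]
    have hv' : (v ^ q) ^ q = -v := by rw [h2, hv]
    rw [div_pow, hDq, hsub, mul_pow, mul_pow, hu', hv']
    have : u ^ q * -v - v ^ q * -u = u * v ^ q - v * u ^ q := by ring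
    rw [this]
  -- Frobenius of linear combinations with 𝔽_q-coefficients
  have hlin : ∀ r s u v : F, r ^ q = r → s ^ q = s →
      (r * u + s * v) ^ q = r * u ^ q + s * v ^ q := by
    intro r s u v hr hs
    rw [hadd, mul_pow, mul_pow, hr, hs]
  refine ⟨⟨⟨(x' * y ^ q - y * x' ^ q) / D, (y' * y ^ q - y * y' ^ q) / D,
      (x * x' ^ q - x' * x ^ q) / D, (x * y' ^ q - y' * x ^ q) / D⟩,
      ⟨⟨hfield x' y hx2n' hy2n, hfield y' y hy2n' hy2n, ?_, ?_⟩, ?_, ?_⟩, ?_⟩, ?_⟩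
  · -- c : note x * x'^q - x' * x^q = -(x' * x^q - x * x'^q), same shape
    have h1 : (x * x' ^ q - x' * x ^ q) = -(x' * x ^ q - x * x' ^ q) := by ring
    have := hfield x' x hx2n' hx2n
    rw [h1, neg_div, neg_pow, hqodd.neg_one_pow, this]; ring
  · have h1 : (x * y' ^ q - y' * x ^ q) = -(y' * x ^ q - x * y' ^ q) := by ring
    have := hfield y' x hy2n' hx2n
    rw [h1, neg_div, neg_pow, hqodd.neg_one_pow, this]; ring
  · field_simp
    ring
  · field_simp
    ring
  · rintro ⟨a, b, c, d⟩ ⟨⟨ha, hb, hc, hd⟩, he1, he2⟩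
    simp only at he1 he2 ha hb hc hd
    have hfx : x' ^ q = a * x ^ q + c * y ^ q := by rw [he1, hlin a c x y ha hc]
    have hfy : y' ^ q = b * x ^ q + d * y ^ q := by rw [he2, hlin b d x y hb hd]
    simp only [Prod.mk.injEq]
    refine ⟨?_, ?_, ?_, ?_⟩
    · rw [eq_div_iff hD, hfx, he1, hDdef]; ring
    · rw [eq_div_iff hD, hfy, he2, hDdef]; ring
    · rw [eq_div_iff hD, hfx, he1, hDdef]; ring
    · rw [eq_div_iff hD, hfy, he2, hDdef]; ring
  · intro a b c d ha hb hc hd he1 he2 hcontra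
    simp only at he1 he2
    have hfx : x' ^ q = a * x ^ q + c * y ^ q := by rw [he1, hlin a c x y ha hc]
    have hfy : y' ^ q = b * x ^ q + d * y ^ q := by rw [he2, hlin b d x y hb hd]
    apply hΔ'
    have : x' ^ q * y' - x' * y' ^ q = (a * d - b * c) * (x ^ q * y - x * y ^ q) := by
      rw [hfx, hfy, he1, he2]; ring
    rw [this, hcontra, zero_mul]
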